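/- Let p be a prime number. Then the polynomial f_{1,p}(X) = X^{p-1} + 2X^{p-2} + ⋯ + (p-1)X + p is irreducible in ℤ[X]. -/

import Mathlib

open Polynomial

/-- `f1 n = X^(n-1) + 2 X^(n-2) + ⋯ + (n-1) X + n = Σ_{k=1}^n k · X^(n-k)` over `ℤ`. -/
noncomputable def f1 (n : ℕ) : Polynomial ℤ :=
  ∑ k ∈ Finset.Icc 1 n, C (k : ℤ) * X ^ (n - k)

lemma f1_succ (n : ℕ) : f1 (n + 1) = X * f1 n + C ((n : ℤ) + 1) := by
  unfold f1
  rw [Finset.sum_Icc_succ_top (by omega : 1 ≤ n + 1)]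
  rw [Finset.mul_sum]
  congr 1
  · apply Finset.sum_congr rfl
    intro k hk
    simp only [Finset.mem_Icc] at hk
    rw [show n + 1 - k = (n - k) + 1 by omega, pow_succ]
    ring
  · simp [Nat.sub_self]

lemma f1_monic_deg (n : ℕ) (hn : 1 ≤ n) : (f1 n).Monic ∧ (f1 n).natDegree = n - 1 := by
  induction n with
  | zero => omega
  | succ m ih =>
    rcases Nat.lt_or_ge m 1 with h | h
    · interval_cases m
      constructor
      · rw [f1_succ]
        simp [f1, Polynomial.monic_one]
      · rw [f1_succ]
        simp [f1]
    · obtain ⟨hmon, hdeg⟩ := ih h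
      have h1 : (X * f1 m).Monic := (monic_X).mul hmon
      have hd : (X * f1 m).natDegree = m := by
        rw [natDegree_mul X_ne_zero hmon.ne_zero, natDegree_X, hdeg]
        omega
      have hlt : (C ((m : ℤ) + 1)).degree < (X * f1 m).degree := by
        apply lt_of_le_of_lt degree_C_le
        rw [degree_eq_natDegree h1.ne_zero, hd]
        exact_mod_cast h
      constructor
      · rw [f1_succ]
        exact h1.add_of_left hlt
      · rw [f1_succ, natDegree_add_C, hd]
        omega

lemma f1_eval_zero (n : ℕ) (hn : 1 ≤ n) : (f1 n).eval 0 = (n : ℤ) := by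
  obtain ⟨m, rfl⟩ : ∃ m, n = m + 1 := ⟨n - 1, by omega⟩
  rw [f1_succ]
  simp

/-- Geometric-like identity. -/
lemma geom_aux (z : ℂ) (n : ℕ) :
    (z - 1) * ∑ j ∈ Finset.Icc 1 n, z ^ j = z ^ (n + 1) - z := by
  induction n with
  | zero => simp
  | succ m ih =>
    rw [Finset.sum_Icc_succ_top (by omega : 1 ≤ m + 1)]
    ring_nf
    ring_nf at ih
    linear_combination ih

/-- Key evaluation identity: `(z-1) * f1(z) = (Σ_{j=1}^n z^j) - n`. -/
lemma key_identity (z : ℂ) (n : ℕ) :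
    (z - 1) * ∑ k ∈ Finset.Icc 1 n, (k : ℂ) * z ^ (n - k) =
      (∑ j ∈ Finset.Icc 1 n, z ^ j) - n := by
  induction n with
  | zero => simp
  | succ m ih =>
    rw [Finset.sum_Icc_succ_top (by omega : 1 ≤ m + 1),
      Finset.sum_Icc_succ_top (by omega : 1 ≤ m + 1)]
    have step : ∑ k ∈ Finset.Icc 1 m, (k : ℂ) * z ^ (m + 1 - k)
        = z * ∑ k ∈ Finset.Icc 1 m, (k : ℂ) * z ^ (m - k) := by
      rw [Finset.mul_sum]
      apply Finset.sum_congr rfl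
      intro k hk
      simp only [Finset.mem_Icc] at hk
      rw [show m + 1 - k = (m - k) + 1 by omega, pow_succ]
      ring
    rw [step]
    have hg := geom_aux z m
    push_cast
    simp only [Nat.sub_self, pow_zero]
    linear_combination z * ih + hg

/-- Every complex root of `f1 n` (viewed via its evaluation formula) has `|z| > 1`. -/
lemma root_abs_gt_one (n : ℕ) (hn : 1 ≤ n) (z : ℂ)
    (hz : ∑ k ∈ Finset.Icc 1 n, (k : ℂ) * z ^ (n - k) = 0) : 1 < ‖z‖ := by
  by_contra hle
  push_neg at hle
  have hid := key_identity z n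
  rw [hz, mul_zero] at hid
  have hT : ∑ j ∈ Finset.Icc 1 n, z ^ j = (n : ℂ) := sub_eq_zero.mp hid.symm
  -- first rule out z = 1
  have hz1 : z ≠ 1 := by
    intro h
    rw [h] at hz
    simp only [one_pow, mul_one] at hz
    have : ((∑ k ∈ Finset.Icc 1 n, k : ℕ) : ℂ) = 0 := by push_cast; exact hz
    have h0 : (∑ k ∈ Finset.Icc 1 n, k) = 0 := by exact_mod_cast this
    have hmem : n ∈ Finset.Icc 1 n := Finset.mem_Icc.mpr ⟨hn, le_rfl⟩
    have := Finset.sum_eq_zero_iff.mp h0 n hmem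
    omega
  -- real part argument
  have habs : ∀ j : ℕ, 1 ≤ j → (z ^ j).re ≤ 1 := by
    intro j hj
    calc (z ^ j).re ≤ ‖z ^ j‖ := Complex.re_le_norm _
      _ = ‖z‖ ^ j := by rw [norm_pow]
      _ ≤ 1 := pow_le_one₀ (norm_nonneg z) hle
  have hre : (n : ℝ) = ∑ j ∈ Finset.Icc 1 n, (z ^ j).re := by
    have := congrArg Complex.re hT
    rw [Complex.re_sum] at this
    simp at this
    exact this.symm
  have hsplit : Finset.Icc 1 n = insert 1 (Finset.Icc 2 n) := by
    ext x
    simp only [Finset.mem_Icc, Finset.mem_insert]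
    omega
  have hsum2 : ∑ j ∈ Finset.Icc 2 n, (z ^ j).re ≤ (n - 1 : ℝ) := by
    calc ∑ j ∈ Finset.Icc 2 n, (z ^ j).re ≤ ∑ j ∈ Finset.Icc 2 n, (1 : ℝ) :=
          Finset.sum_le_sum (fun j hj => habs j (by
            simp only [Finset.mem_Icc] at hj; omega))
      _ = (Finset.Icc 2 n).card := by simp
      _ ≤ (n - 1 : ℝ) := by
          rw [Nat.card_Icc, show n + 1 - 2 = n - 1 by omega, Nat.cast_sub hn]
          simp
  have h1not : (1 : ℕ) ∉ Finset.Icc 2 n := by simp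
  have hre' : (n : ℝ) = z.re + ∑ j ∈ Finset.Icc 2 n, (z ^ j).re := by
    rw [hre, hsplit, Finset.sum_insert h1not, pow_one]
  have hzre : (1 : ℝ) ≤ z.re := by linarith
  have hzre1 : z.re ≤ 1 := le_trans (Complex.re_le_norm z) hle
  have hzreeq : z.re = 1 := le_antisymm hzre1 hzre
  have him : z.im = 0 := by
    have h2 : ‖z‖ ^ 2 ≤ 1 := pow_le_one₀ (norm_nonneg z) hle
    rw [Complex.sq_norm, Complex.normSq_apply, hzreeq] at h2
    nlinarith [sq_nonneg z.im]
  exact hz1 (Complex.ext hzreeq him)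

lemma f1_map_eval (n : ℕ) (z : ℂ) :
    ((f1 n).map (Int.castRingHom ℂ)).eval z = ∑ k ∈ Finset.Icc 1 n, (k : ℂ) * z ^ (n - k) := by
  simp [f1, Polynomial.map_sum, Polynomial.eval_finset_sum]

/-- If `a` divides `f1 p` (via `f1 p = a * b`) and the constant term of `a` is a unit,
then `a` is a unit. -/
lemma aux_unit (p : ℕ) (hp : p.Prime) (a b : Polynomial ℤ) (hab : f1 p = a * b)
    (h0 : IsUnit (a.eval 0)) : IsUnit a := by
  have hp1 : 1 ≤ p := hp.one_le
  obtain ⟨hmon, hdeg⟩ := f1_monic_deg p hp1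
  have hane : a ≠ 0 := by
    intro h; rw [h, zero_mul] at hab; exact hmon.ne_zero hab
  -- suffices natDegree a = 0
  rcases Nat.eq_zero_or_pos a.natDegree with hd0 | hdpos
  · obtain ⟨c, hc⟩ := Polynomial.natDegree_eq_zero.mp hd0
    have : a.eval 0 = c := by rw [← hc]; simp
    rw [← hc]
    exact Polynomial.isUnit_C.mpr (this ▸ h0)
  · exfalso
    set φ := Int.castRingHom ℂ
    set aC := a.map φ with haC
    have hinj : Function.Injective (φ : ℤ → ℂ) := Int.cast_injective
    have hdegC : aC.natDegree = a.natDegree := Polynomial.natDegree_map_eq_of_injective hinj a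
    have haCne : aC ≠ 0 := by
      intro h
      apply hane
      exact Polynomial.map_injective φ hinj (by simpa using h)
    have hsplits : aC.Splits := IsAlgClosed.splits aC
    have hcard : aC.roots.card = aC.natDegree :=
      (Polynomial.splits_iff_card_roots).mp hsplits
    have hprod := hsplits.eq_prod_roots
    -- every root of aC has abs > 1
    have hroots : ∀ r ∈ aC.roots, 1 < ‖r‖ := by
      intro r hr
      have hra : aC.IsRoot r := Polynomial.isRoot_of_mem_roots hr
      have hrf : ((f1 p).map φ).eval r = 0 := by
        rw [hab, Polynomial.map_mul, Polynomial.eval_mul]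
        rw [show aC.eval r = 0 from hra]
        ring
      rw [f1_map_eval] at hrf
      exact root_abs_gt_one p hp1 r hrf
    -- compute |aC.eval 0|
    have heval0 : aC.eval 0 = φ (a.eval 0) := by
      rw [haC, Polynomial.eval_map, Polynomial.eval₂_at_zero,
        ← Polynomial.coeff_zero_eq_eval_zero]
    have habs1 : ‖aC.eval 0‖ = 1 := by
      rw [heval0]
      rcases Int.isUnit_iff.mp h0 with h | h <;> simp [h, φ]
    have hlead : ‖aC.leadingCoeff‖ = 1 := by
      have hml : a.leadingCoeff * b.leadingCoeff = 1 := by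
        have := congrArg Polynomial.leadingCoeff hab
        rw [Polynomial.leadingCoeff_mul] at this
        rw [← this]; exact hmon
      have : IsUnit a.leadingCoeff := IsUnit.of_mul_eq_one _ hml
      have hlc : aC.leadingCoeff = φ a.leadingCoeff := by
        rw [haC]
        apply Polynomial.leadingCoeff_map_of_leadingCoeff_ne_zero
        simp [φ]
        exact hane
      rcases Int.isUnit_iff.mp this with h | h <;> rw [hlc, h] <;> simp [φ]
    have hev : ‖aC.eval 0‖ =
        (aC.roots.map (fun r => ‖r‖)).prod := by
      conv_lhs => rw [hprod]
      rw [Polynomial.eval_mul, Polynomial.eval_C, Polynomial.eval_multiset_prod]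
      rw [norm_mul, show ∀ m : Multiset ℂ, ‖m.prod‖ = (m.map (‖·‖)).prod from
        fun m => map_multiset_prod (normHom : ℂ →*₀ ℝ) m]
      rw [hlead, one_mul]
      rw [Multiset.map_map, Multiset.map_map]
      congr 1
      apply Multiset.map_congr rfl
      intro r hr
      simp
    -- product of roots' abs is > 1
    have hne : aC.roots ≠ 0 := by
      intro h
      rw [h] at hcard
      simp [hdegC] at hcard
      omega
    obtain ⟨r, hr⟩ := Multiset.exists_mem_of_ne_zero hne
    obtain ⟨s, hs⟩ := Multiset.exists_cons_of_mem hr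
    have hprodgt : 1 < (aC.roots.map (fun r => ‖r‖)).prod := by
      rw [hs, Multiset.map_cons, Multiset.prod_cons]
      have hs1 : (1 : ℝ) ≤ (s.map (fun r => ‖r‖)).prod := by
        apply Multiset.one_le_prod
        intro x hx
        obtain ⟨y, hy, rfl⟩ := Multiset.mem_map.mp hx
        have : y ∈ aC.roots := by rw [hs]; exact Multiset.mem_cons_of_mem hy
        exact le_of_lt (hroots y this)
      have hr1 : 1 < ‖r‖ := hroots r hr
      nlinarith
    rw [hev] at habs1
    rw [habs1] at hprodgt
    exact lt_irrefl 1 hprodgt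

/-- If `p` is prime, then `f1 p = X^(p-1) + 2X^(p-2) + ⋯ + (p-1)X + p` is
irreducible in `ℤ[X]`. -/
theorem stmt5 (p : ℕ) (hp : p.Prime) : Irreducible (f1 p) := by
  have hp1 : 1 ≤ p := hp.one_le
  have hp2 : 2 ≤ p := hp.two_le
  obtain ⟨hmon, hdeg⟩ := f1_monic_deg p hp1
  constructor
  · intro hu
    have := Polynomial.natDegree_eq_zero_of_isUnit hu
    omega
  · intro a b hab
    have hev : a.eval 0 * b.eval 0 = (p : ℤ) := by
      rw [← Polynomial.eval_mul, ← hab, f1_eval_zero p hp1]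
    have hprime : Prime ((p : ℤ)) := Nat.prime_iff_prime_int.mp hp
    rcases hprime.irreducible.isUnit_or_isUnit hev.symm with h | h
    · exact Or.inl (aux_unit p hp a b hab h)
    · exact Or.inr (aux_unit p hp b a (by rw [hab, mul_comm]) h)
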